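/- For every w > 0, ∫_{−2}^{2} (1/(π√(4−x²))) · 1/( x − √(1+4w²)/w ) dx = −w. -/

import Mathlib

open Real MeasureTheory Set intervalIntegral

lemma sqrt_integrable :
    IntervalIntegrable (fun x : ℝ => (Real.sqrt (4 - x ^ 2))⁻¹) volume (-2) 2 := by
  have h1 : IntervalIntegrable (fun x : ℝ => (x + 2) ^ (-(1/2 : ℝ))) volume (-2) 2 := by
    have := (intervalIntegral.intervalIntegrable_rpow' (a := 0) (b := 4)
      (r := -(1/2 : ℝ)) (by norm_num)).comp_add_right 2
    norm_num at this
    exact this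
  have h2 : IntervalIntegrable (fun x : ℝ => (2 - x) ^ (-(1/2 : ℝ))) volume (-2) 2 := by
    have := ((IntervalIntegrable.iff_comp_neg).mp h1)
    norm_num at this
    have e : (fun x : ℝ => (-x + 2) ^ (-(1/2:ℝ))) = (fun x : ℝ => (2 - x) ^ (-(1/2:ℝ))) := by
      funext x; ring_nf
    rw [e] at this
    exact this.symm
  apply IntervalIntegrable.mono_fun'
    (g := fun x => (2 - x) ^ (-(1/2:ℝ)) + (x + 2) ^ (-(1/2:ℝ))) (h2.add h1)
  · exact ((Real.continuous_sqrt.comp (by continuity :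
      Continuous fun x : ℝ => 4 - x ^ 2)).measurable.inv).aestronglyMeasurable
  · rw [Filter.EventuallyLE, ae_restrict_iff' measurableSet_uIoc]
    filter_upwards with x hx
    rw [uIoc_of_le (by norm_num : (-2:ℝ) ≤ 2)] at hx
    have hu : (0:ℝ) < 2 + x := by linarith [hx.1]
    have hv : (0:ℝ) ≤ 2 - x := by linarith [hx.2]
    have hsq : Real.sqrt (4 - x ^ 2) = Real.sqrt (2 - x) * Real.sqrt (2 + x) := by
      rw [← Real.sqrt_mul hv]; ring_nf
    have e1 : (2 - x) ^ (-(1/2:ℝ)) = (Real.sqrt (2 - x))⁻¹ := by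
      rw [Real.rpow_neg hv, ← Real.sqrt_eq_rpow]
    have e2 : (x + 2) ^ (-(1/2:ℝ)) = (Real.sqrt (2 + x))⁻¹ := by
      rw [add_comm, Real.rpow_neg hu.le, ← Real.sqrt_eq_rpow]
    rw [Real.norm_eq_abs, abs_of_nonneg (by positivity), hsq, e1, e2]
    set su := Real.sqrt (2 - x) with hsu
    set sv := Real.sqrt (2 + x) with hsv
    have hsvp : 0 < sv := Real.sqrt_pos.mpr hu
    rcases eq_or_lt_of_le (Real.sqrt_nonneg (2 - x)) with h0 | hsup
    · rw [← hsu] at h0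
      simp [← h0]
      positivity
    · have hsu2 : su ^ 2 = 2 - x := Real.sq_sqrt hv
      have hsv2 : sv ^ 2 = 2 + x := Real.sq_sqrt hu.le
      have hsum : 1 ≤ su + sv := by nlinarith [mul_pos hsup hsvp]
      calc (su * sv)⁻¹ = (su * sv)⁻¹ * 1 := by ring
        _ ≤ (su * sv)⁻¹ * (su + sv) := by
            apply mul_le_mul_of_nonneg_left hsum (by positivity)
        _ = su⁻¹ + sv⁻¹ := by field_simp; rw [add_div, div_self (a := su) (ne_of_gt hsup), add_comm]

theorem arcsine_R_transform (w : ℝ) (hw : 0 < w) :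
    (∫ x in (-2 : ℝ)..2,
        (1 / (Real.pi * Real.sqrt (4 - x ^ 2))) * (x - Real.sqrt (1 + 4 * w ^ 2) / w)⁻¹)
      = -w := by
  have hpi := Real.pi_pos
  set b := Real.sqrt (1 + 4 * w ^ 2) with hbdef
  have hb2 : b ^ 2 = 1 + 4 * w ^ 2 := Real.sq_sqrt (by positivity)
  have hbpos : 0 < b := Real.sqrt_pos.mpr (by positivity)
  have hbgt : 2 * w < b := by nlinarith
  have hs : 2 < b / w := by rw [lt_div_iff₀ hw]; linarith
  set F : ℝ → ℝ := fun x =>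
    -(2 * w / Real.pi) * Real.arctan (b * x / (2 + Real.sqrt (4 - x ^ 2)) - 2 * w) with hF
  have key : (∫ x in (-2:ℝ)..2,
      (1 / (Real.pi * Real.sqrt (4 - x ^ 2))) * (x - b / w)⁻¹) = F 2 - F (-2) := by
    apply intervalIntegral.integral_eq_sub_of_hasDeriv_right_of_le (by norm_num)
    · -- continuity of F
      apply Continuous.continuousOn
      apply Continuous.mul continuous_const
      apply Real.continuous_arctan.comp
      apply Continuous.sub _ continuous_const
      apply Continuous.div (by continuity) (by continuity)
      intro x
      have := Real.sqrt_nonneg (4 - x ^ 2)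
      positivity
    · -- derivative
      intro x hx
      obtain ⟨hx1, hx2⟩ := hx
      have hy2 : Real.sqrt (4 - x ^ 2) ^ 2 = 4 - x ^ 2 := Real.sq_sqrt (by nlinarith)
      have hypos : 0 < Real.sqrt (4 - x ^ 2) := Real.sqrt_pos.mpr (by nlinarith)
      set y := Real.sqrt (4 - x ^ 2) with hy
      have hden : (2 : ℝ) + y ≠ 0 := by positivity
      have hg : HasDerivAt (fun t : ℝ => 2 + Real.sqrt (4 - t ^ 2))
          ((-(2*x)) / (2 * y)) x := by
        have h0 : HasDerivAt (fun t : ℝ => 4 - t ^ 2) (-(2*x)) x := by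
          simpa using ((hasDerivAt_pow 2 x).const_sub 4)
        have h1 := h0.sqrt (ne_of_gt (by nlinarith))
        rw [← hy] at h1
        exact h1.const_add 2
      have hn : HasDerivAt (fun t : ℝ => b * t) b x := by
        simpa using (hasDerivAt_id x).const_mul b
      have hu : HasDerivAt (fun t : ℝ => b * t / (2 + Real.sqrt (4 - t ^ 2)) - 2 * w)
          ((b * (2 + y) - b * x * ((-(2*x)) / (2 * y))) / (2 + y) ^ 2) x := by
        exact ((hn.div hg hden)).sub_const (2 * w)
      have harc := (Real.hasDerivAt_arctan (b * x / (2 + y) - 2 * w)).comp x hu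
      have hfinal := harc.const_mul (-(2 * w / Real.pi))
      convert hfinal.hasDerivWithinAt using 1
      · rfl
      have hbwx : 0 < b - w * x := by nlinarith
      have hnum : b * (2 + y) - b * x * ((-(2*x)) / (2 * y)) = 2 * b * (2 + y) / y := by
        field_simp
        linear_combination hy2
      have hD : 1 + (b * x / (2 + y) - 2 * w) ^ 2
          = 4 * b * (2 + y) * (b - w * x) / (2 + y) ^ 2 := by
        field_simp
        linear_combination b ^ 2 * hy2 - ((2 + y) ^ 2 + x ^ 2) * hb2 + x ^ 2 * hb2
      rw [hnum, hD]
      have hR : -(2 * w / Real.pi) * (1 / (4 * b * (2 + y) * (b - w * x) / (2 + y) ^ 2)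
            * (2 * b * (2 + y) / y / (2 + y) ^ 2))
          = -w / (Real.pi * y * (b - w * x)) := by
        have hbwx' : b - w * x ≠ 0 := ne_of_gt hbwx
        field_simp
        ring
      have hxbw : x - b / w = -((b - w * x) / w) := by
        field_simp
        ring
      have hL : 1 / (Real.pi * y) * (x - b / w)⁻¹ = -w / (Real.pi * y * (b - w * x)) := by
        have hbwx' : b - w * x ≠ 0 := ne_of_gt hbwx
        rw [hxbw, inv_neg, inv_div, mul_neg, div_mul_div_comm, one_mul, ← neg_div]
      rw [hL, hR]
    · -- integrability
      have heq : (fun x : ℝ => (1 / (Real.pi * Real.sqrt (4 - x ^ 2))) * (x - b / w)⁻¹)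
          = (fun x : ℝ => ((Real.pi)⁻¹ * (x - b / w)⁻¹) * (Real.sqrt (4 - x ^ 2))⁻¹) := by
        funext x; field_simp
      rw [heq]
      apply IntervalIntegrable.continuousOn_mul sqrt_integrable
      apply ContinuousOn.mul continuousOn_const
      apply ContinuousOn.inv₀ (by fun_prop)
      intro x hx
      rw [uIcc_of_le (by norm_num : (-2:ℝ) ≤ 2)] at hx
      have : x < b / w := lt_of_le_of_lt hx.2 hs
      linarith
  rw [key]
  simp only [hF]
  have h2 : Real.sqrt (4 - (2:ℝ) ^ 2) = 0 := by
    rw [show (4:ℝ) - 2^2 = 0 by norm_num, Real.sqrt_zero]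
  have h2' : Real.sqrt (4 - (-2:ℝ) ^ 2) = 0 := by
    rw [show (4:ℝ) - (-2:ℝ)^2 = 0 by norm_num, Real.sqrt_zero]
  rw [h2, h2']
  have e1 : b * 2 / (2 + 0) - 2 * w = b - 2 * w := by ring
  have e2 : b * (-2) / (2 + 0) - 2 * w = -(b + 2 * w) := by ring
  rw [e1, e2, Real.arctan_neg]
  have hpos : 0 < b - 2 * w := by linarith
  have hprod : b + 2 * w = (b - 2 * w)⁻¹ :=
    eq_inv_of_mul_eq_one_left (by nlinarith)
  have hsum : Real.arctan (b - 2 * w) + Real.arctan (b + 2 * w) = Real.pi / 2 := by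
    rw [hprod, Real.arctan_inv_of_pos hpos]; ring
  have hpne : Real.pi ≠ 0 := ne_of_gt hpi
  have harc2 : Real.arctan (b + 2 * w) = Real.pi / 2 - Real.arctan (b - 2 * w) := by
    linarith [hsum]
  rw [harc2]
  have hred : -(2 * w / Real.pi) * Real.arctan (b - 2 * w)
      - -(2 * w / Real.pi) * -(Real.pi / 2 - Real.arctan (b - 2 * w))
      = -(2 * w / Real.pi) * (Real.pi / 2) := by ring
  rw [hred]
  field_simp
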